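/- arXiv:2206.10383 — 2 statements merged into one kernel-verified Lean document; each statement's English description precedes it below -/
import Mathlib

section
/- The sum of the lengths of all minimal co-occurrences of Q in S is at most n·q, where length of [i,j] is j−i+1. -/
open Finset

/-- `[i,j]` is a co-occurrence of `Q` in the length-`n` string `S` (1-indexed):
`1 ≤ i ≤ j ≤ n` and every character of `Q` occurs in `S[i..j]`. -/
def Cooc {α : Type*} (n : ℕ) (S : ℕ → α) (Q : Finset α) (i j : ℕ) : Prop :=
  1 ≤ i ∧ i ≤ j ∧ j ≤ n ∧ ∀ c ∈ Q, ∃ k, i ≤ k ∧ k ≤ j ∧ S k = c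

/-- `[i,j]` is a left-minimal co-occurrence: a co-occurrence such that `[i+1,j]` is not. -/
def LeftMinCooc {α : Type*} (n : ℕ) (S : ℕ → α) (Q : Finset α) (i j : ℕ) : Prop :=
  Cooc n S Q i j ∧ ¬ Cooc n S Q (i+1) j

/-- `[i,j]` is a minimal co-occurrence: a co-occurrence such that neither
`[i+1,j]` nor `[i,j-1]` is a co-occurrence. -/
def MinCooc {α : Type*} (n : ℕ) (S : ℕ → α) (Q : Finset α) (i j : ℕ) : Prop :=
  Cooc n S Q i j ∧ ¬ Cooc n S Q (i+1) j ∧ ¬ Cooc n S Q i (j-1)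

/-- `lmco n S Q w`: number of left-minimal co-occurrences of `Q` in `S` of length `w`. -/
noncomputable def lmco {α : Type*} (n : ℕ) (S : ℕ → α) (Q : Finset α) (w : ℕ) : ℕ :=
  {p : ℕ × ℕ | LeftMinCooc n S Q p.1 p.2 ∧ p.2 - p.1 + 1 = w}.ncard

/-- `dlt n S Q i = lmco(i) - lmco(i-1)` as an integer. -/
noncomputable def dlt {α : Type*} (n : ℕ) (S : ℕ → α) (Q : Finset α) (i : ℕ) : ℤ :=
  (lmco n S Q i : ℤ) - (lmco n S Q (i-1) : ℤ)

/-- `coN n S Q w`: number of length-`w` co-occurrences of `Q` in `S`, i.e. the number of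
windows `[k-w+1,k]` with `w ≤ k ≤ n` that are co-occurrences. -/
noncomputable def coN {α : Type*} (n : ℕ) (S : ℕ → α) (Q : Finset α) (w : ℕ) : ℕ :=
  {k : ℕ | w ≤ k ∧ k ≤ n ∧ Cooc n S Q (k - w + 1) k}.ncard

lemma cooc_mono {α : Type*} {n : ℕ} {S : ℕ → α} {Q : Finset α} {i j j' : ℕ}
    (h : Cooc n S Q i j) (hj : j ≤ j') (hn : j' ≤ n) : Cooc n S Q i j' := by
  obtain ⟨h1, h2, _, h4⟩ := h
  exact ⟨h1, h2.trans hj, hn, fun c hc => by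
    obtain ⟨k, hk1, hk2, hk3⟩ := h4 c hc
    exact ⟨k, hk1, hk2.trans hj, hk3⟩⟩

lemma minCooc_lt {α : Type*} {n : ℕ} {S : ℕ → α} {Q : Finset α} {i j : ℕ}
    (hQ : 2 ≤ Q.card) (h : MinCooc n S Q i j) : i < j := by
  obtain ⟨⟨h1, h2, h3, h4⟩, _, _⟩ := h
  rcases lt_or_eq_of_le h2 with h | h
  · exact h
  · exfalso
    subst h
    have hsub : Q ⊆ {S i} := fun c hc => by
      obtain ⟨k, hk1, hk2, hk3⟩ := h4 c hc
      have : k = i := by omega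
      subst this
      simp [hk3]
    have := Finset.card_le_card hsub
    simp at this
    omega

lemma minCooc_left {α : Type*} {n : ℕ} {S : ℕ → α} {Q : Finset α} {i j : ℕ}
    (hQ : 2 ≤ Q.card) (h : MinCooc n S Q i j) :
    S i ∈ Q ∧ ∀ k, i < k → k ≤ j → S k ≠ S i := by
  have hij := minCooc_lt hQ h
  obtain ⟨⟨h1, h2, h3, h4⟩, hnot, _⟩ := h
  rw [Cooc] at hnot
  push_neg at hnot
  obtain ⟨c, hc, hc2⟩ := hnot (by omega) (by omega) h3
  obtain ⟨k, hk1, hk2, hk3⟩ := h4 c hc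
  have hki : k = i := by
    by_contra hne
    exact hc2 k (by omega) hk2 hk3
  subst hki
  constructor
  · rw [hk3]; exact hc
  · intro m hm1 hm2 hme
    exact hc2 m (by omega) hm2 (hme.trans hk3)

lemma minCooc_j_eq {α : Type*} {n : ℕ} {S : ℕ → α} {Q : Finset α} {i j j' : ℕ}
    (h : MinCooc n S Q i j) (h' : MinCooc n S Q i j') : j = j' := by
  by_contra hne
  wlog hlt : j < j' generalizing j j'
  · exact this h' h (Ne.symm hne) (by omega)
  · have hn : j' ≤ n := h'.1.2.2.1
    exact h'.2.2 (cooc_mono h.1 (by omega) (by omega))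

theorem stmt6 {α : Type*} (n : ℕ) (S : ℕ → α) (Q : Finset α) (hQ : 2 ≤ Q.card)
    (M : Finset (ℕ × ℕ)) (hM : ∀ p : ℕ × ℕ, p ∈ M ↔ MinCooc n S Q p.1 p.2) :
    ∑ p ∈ M, (p.2 - p.1 + 1) ≤ n * Q.card := by
  classical
  have key : ∀ k ∈ Icc 1 n,
      (M.filter (fun p => p.1 ≤ k ∧ k ≤ p.2)).card ≤ Q.card := by
    intro k _
    apply Finset.card_le_card_of_injOn (fun p => S p.1)
    · intro p hp
      simp only [mem_coe, mem_filter] at hp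
      exact (minCooc_left hQ ((hM p).1 hp.1)).1
    · intro p hp p' hp' heq
      simp only [coe_filter, Set.mem_setOf_eq] at hp hp'
      obtain ⟨hpM, hpk1, hpk2⟩ := hp
      obtain ⟨hp'M, hp'k1, hp'k2⟩ := hp'
      have mp := (hM p).1 hpM
      have mp' := (hM p').1 hp'M
      have l := minCooc_left hQ mp
      have l' := minCooc_left hQ mp'
      have hii : p.1 = p'.1 := by
        by_contra hne
        rcases Nat.lt_or_ge p.1 p'.1 with h | h
        · exact l.2 p'.1 h (le_trans hp'k1 hpk2) heq.symm
        · exact l'.2 p.1 (by omega) (le_trans hpk1 hp'k2) heq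
      have hjj : p.2 = p'.2 := minCooc_j_eq (hii ▸ mp) mp'
      exact Prod.ext hii hjj
  calc ∑ p ∈ M, (p.2 - p.1 + 1)
      = ∑ p ∈ M, ((Icc 1 n).filter (fun k => p.1 ≤ k ∧ k ≤ p.2)).card := by
        apply Finset.sum_congr rfl
        intro p hp
        have m := ((hM p).1 hp).1
        obtain ⟨m1, m2, m3, _⟩ := m
        have : (Icc 1 n).filter (fun k => p.1 ≤ k ∧ k ≤ p.2) = Icc p.1 p.2 := by
          ext k
          simp only [mem_filter, mem_Icc]
          omega
        rw [this, Nat.card_Icc]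
        omega
    _ = ∑ p ∈ M, ∑ k ∈ Icc 1 n, (if p.1 ≤ k ∧ k ≤ p.2 then 1 else 0) :=
        Finset.sum_congr rfl fun p _ => Finset.card_filter _ _
    _ = ∑ k ∈ Icc 1 n, ∑ p ∈ M, (if p.1 ≤ k ∧ k ≤ p.2 then 1 else 0) :=
        Finset.sum_comm
    _ = ∑ k ∈ Icc 1 n, (M.filter (fun p => p.1 ≤ k ∧ k ≤ p.2)).card :=
        Finset.sum_congr rfl fun k _ => (Finset.card_filter _ _).symm
    _ ≤ ∑ k ∈ Icc 1 n, Q.card := Finset.sum_le_sum key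
    _ = n * Q.card := by
        rw [Finset.sum_const, Nat.card_Icc]
        simp [mul_comm]
end

section
/- Let co(w) be the number of length-w co-occurrences of Q in S and lmco(w) the number of length-w left-minimal co-occurrences. Let y₁ be the smallest right endpoint of a minimal co-occurrence (assuming one exists). Then for all w, co(w) = (∑_{i=2}^{w} lmco(i)) − max(w − y₁, 0). -/
open Finset

lemma cooc_mono_left {α : Type*} {n : ℕ} {S : ℕ → α} {Q : Finset α} {i i' j : ℕ}
    (h : Cooc n S Q i j) (h1 : 1 ≤ i') (h2 : i' ≤ i) : Cooc n S Q i' j := by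
  obtain ⟨_, hij, hjn, hc⟩ := h
  exact ⟨h1, le_trans h2 hij, hjn, fun c hc' => by
    obtain ⟨k, hk1, hk2, hk3⟩ := hc c hc'; exact ⟨k, le_trans h2 hk1, hk2, hk3⟩⟩

lemma cooc_mono_right {α : Type*} {n : ℕ} {S : ℕ → α} {Q : Finset α} {i j j' : ℕ}
    (h : Cooc n S Q i j) (h1 : j ≤ j') (h2 : j' ≤ n) : Cooc n S Q i j' := by
  obtain ⟨hi1, hij, hjn, hc⟩ := h
  exact ⟨hi1, le_trans hij h1, h2, fun c hc' => by
    obtain ⟨k, hk1, hk2, hk3⟩ := hc c hc'; exact ⟨k, hk1, le_trans hk2 h1, hk3⟩⟩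

lemma cooc_lt {α : Type*} {n : ℕ} {S : ℕ → α} {Q : Finset α} {i j : ℕ}
    (hQ : 2 ≤ Q.card) (h : Cooc n S Q i j) : i < j := by
  obtain ⟨a, ha, b, hb, hab⟩ := Finset.one_lt_card.mp hQ
  obtain ⟨_, hij, _, hc⟩ := h
  rcases lt_or_eq_of_le hij with h' | h'
  · exact h'
  · exfalso
    obtain ⟨k1, hk11, hk12, hk13⟩ := hc a ha
    obtain ⟨k2, hk21, hk22, hk23⟩ := hc b hb
    subst h'
    have e1 : k1 = i := le_antisymm hk12 hk11
    have e2 : k2 = i := le_antisymm hk22 hk21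
    exact hab (by rw [← hk13, ← hk23, e1, e2])

open Classical in
/-- The left endpoint of the (unique) left-minimal co-occurrence ending at `k`, when one exists. -/
noncomputable def gEnd {α : Type*} (n : ℕ) (S : ℕ → α) (Q : Finset α) (k : ℕ) : ℕ :=
  Nat.findGreatest (fun i => Cooc n S Q i k) k

lemma gEnd_spec {α : Type*} {n : ℕ} {S : ℕ → α} {Q : Finset α}
    (hQ : 2 ≤ Q.card) {i k : ℕ} (h : Cooc n S Q i k) :
    Cooc n S Q (gEnd n S Q k) k ∧ ¬ Cooc n S Q (gEnd n S Q k + 1) k ∧ i ≤ gEnd n S Q k := by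
  classical
  have hik : i ≤ k := h.2.1
  have h1 : Cooc n S Q (gEnd n S Q k) k :=
    Nat.findGreatest_spec (P := fun x => Cooc n S Q x k) hik h
  have hle : i ≤ gEnd n S Q k := Nat.le_findGreatest (P := fun x => Cooc n S Q x k) hik h
  have hlt : gEnd n S Q k < k := cooc_lt hQ h1
  refine ⟨h1, ?_, hle⟩
  exact Nat.findGreatest_is_greatest (P := fun x => Cooc n S Q x k)
    (Nat.lt_succ_self _) (by omega)

lemma exists_min_cooc {α : Type*} {n : ℕ} {S : ℕ → α} {Q : Finset α}
    (hQ : 2 ≤ Q.card) {i k : ℕ} (h : Cooc n S Q i k) :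
    ∃ a b, MinCooc n S Q a b ∧ b ≤ k := by
  classical
  have hex : ∃ j, Cooc n S Q i j := ⟨k, h⟩
  set j0 := Nat.find hex with hj0def
  have hj0 : Cooc n S Q i j0 := Nat.find_spec hex
  have hj0k : j0 ≤ k := Nat.find_min' hex h
  have hij0 : i ≤ j0 := hj0.2.1
  have hi1 : 1 ≤ i := hj0.1
  have hnot : ¬ Cooc n S Q i (j0 - 1) := Nat.find_min hex (by omega)
  obtain ⟨ha, hnot2, hia⟩ := gEnd_spec hQ hj0
  exact ⟨gEnd n S Q j0, j0, ⟨ha, hnot2, fun hcon => hnot (cooc_mono_left hcon hi1 hia)⟩, hj0k⟩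

theorem stmt13 {α : Type*} (n : ℕ) (S : ℕ → α) (Q : Finset α) (hQ : 2 ≤ Q.card)
    (x₁ y₁ : ℕ) (h₁ : MinCooc n S Q x₁ y₁)
    (hleast : ∀ x y : ℕ, MinCooc n S Q x y → y₁ ≤ y)
    (w : ℕ) (hw₁ : 1 ≤ w) (hw₂ : w ≤ n) :
    (coN n S Q w : ℤ) =
      (∑ i ∈ Finset.Icc 2 w, (lmco n S Q i : ℤ)) - max ((w : ℤ) - y₁) 0 := by
  classical
  obtain ⟨hc₁, -, -⟩ := h₁
  have hx1 : 1 ≤ x₁ := hc₁.1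
  have hxy : x₁ ≤ y₁ := hc₁.2.1
  have hyn : y₁ ≤ n := hc₁.2.2.1
  have hy1 : 1 ≤ y₁ := le_trans hx1 hxy
  set g : ℕ → ℕ := gEnd n S Q with hg
  have hgspec : ∀ i k, Cooc n S Q i k →
      Cooc n S Q (g k) k ∧ ¬ Cooc n S Q (g k + 1) k ∧ i ≤ g k :=
    fun i k h => gEnd_spec hQ h
  have hLM : ∀ k, y₁ ≤ k → k ≤ n → LeftMinCooc n S Q (g k) k := by
    intro k h1 h2
    have := hgspec x₁ k (cooc_mono_right hc₁ h1 h2)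
    exact ⟨this.1, this.2.1⟩
  have hEnd : ∀ i k, LeftMinCooc n S Q i k →
      y₁ ≤ k ∧ k ≤ n ∧ i = g k ∧ 1 ≤ i ∧ i < k := by
    intro i k h
    obtain ⟨a, b, hm, hb⟩ := exists_min_cooc hQ h.1
    have hyk : y₁ ≤ k := le_trans (hleast a b hm) hb
    have hkn : k ≤ n := h.1.2.2.1
    have hlt : i < k := cooc_lt hQ h.1
    have hgk := hgspec i k h.1
    have heq : i = g k := by
      by_contra hne
      have hilt : i < g k := lt_of_le_of_ne hgk.2.2 hne
      exact h.2 (cooc_mono_left hgk.1 (by omega) hilt)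
    exact ⟨hyk, hkn, heq, h.1.1, hlt⟩
  have hF2 : ∀ k, y₁ ≤ k → k ≤ n → 1 ≤ g k ∧ g k < k := by
    intro k h1 h2
    obtain ⟨-, -, -, h4, h5⟩ := hEnd _ _ (hLM k h1 h2)
    omega
  set T : Finset ℕ := (Finset.Icc y₁ n).filter (fun k => k - g k + 1 ≤ w) with hT
  -- coN as a finset card
  have hcoN : coN n S Q w = (T.filter (fun k => w ≤ k)).card := by
    have hset : {k : ℕ | w ≤ k ∧ k ≤ n ∧ Cooc n S Q (k - w + 1) k}
        = ↑(T.filter (fun k => w ≤ k)) := by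
      ext k
      simp only [Set.mem_setOf_eq, Finset.coe_filter, Set.mem_setOf_eq, hT,
        Finset.mem_filter, Finset.mem_Icc]
      constructor
      · rintro ⟨hwk, hkn, hc⟩
        have hs := hgspec _ _ hc
        have hEk := hEnd _ _ ⟨hs.1, hs.2.1⟩
        refine ⟨⟨⟨hEk.1, hkn⟩, ?_⟩, hwk⟩
        have h5 := hs.2.2
        have h6 := hEk.2.2.2.2
        omega
      · rintro ⟨⟨⟨hyk, hkn⟩, hFk⟩, hwk⟩
        have hlm := hLM k hyk hkn
        have h1 : 1 ≤ g k := hlm.1.1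
        have h2 : g k ≤ k := hlm.1.2.1
        exact ⟨hwk, hkn, cooc_mono_left hlm.1 (by omega) (by omega)⟩
    unfold coN
    rw [hset, Set.ncard_coe_finset]
  have hinj : Function.Injective (fun k : ℕ => (g k, k)) := by
    intro a b h
    exact congrArg Prod.snd h
  have hlmco : ∀ i ∈ Finset.Icc 2 w,
      lmco n S Q i = (T.filter (fun k => k - g k + 1 = i)).card := by
    intro i hi
    rw [Finset.mem_Icc] at hi
    have hset : {p : ℕ × ℕ | LeftMinCooc n S Q p.1 p.2 ∧ p.2 - p.1 + 1 = i}
        = ↑((T.filter (fun k => k - g k + 1 = i)).image (fun k => (g k, k))) := by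
      ext p
      obtain ⟨a, b⟩ := p
      simp only [Set.mem_setOf_eq, Finset.coe_image, Set.mem_image, Finset.mem_coe,
        Finset.mem_filter, hT, Finset.mem_Icc, Prod.mk.injEq]
      constructor
      · rintro ⟨hlm, hlen⟩
        obtain ⟨hyb, hbn, hga, h1a, habl⟩ := hEnd _ _ hlm
        exact ⟨b, ⟨⟨⟨hyb, hbn⟩, by omega⟩, by omega⟩, hga.symm, rfl⟩
      · rintro ⟨k, ⟨⟨⟨hyk, hkn⟩, -⟩, hFk⟩, hga, hkb⟩
        subst hkb
        rw [← hga]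
        exact ⟨hLM k hyk hkn, by omega⟩
    unfold lmco
    rw [hset, Set.ncard_coe_finset, Finset.card_image_of_injective _ hinj]
  have hfib : T.card = ∑ i ∈ Finset.Icc 2 w, (T.filter (fun k => k - g k + 1 = i)).card := by
    apply Finset.card_eq_sum_card_fiberwise
    intro k hk
    simp only [hT, Finset.mem_coe, Finset.mem_filter, Finset.mem_Icc] at hk
    simp only [Finset.mem_coe, Finset.mem_Icc]
    obtain ⟨⟨h1, h2⟩, h3⟩ := hk
    have := hF2 k h1 h2
    omega
  have hsplit : (T.filter (fun k => w ≤ k)).card + (T.filter (fun k => ¬ w ≤ k)).card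
      = T.card := Finset.card_filter_add_card_filter_not _
  have hlow : T.filter (fun k => ¬ w ≤ k) = Finset.Ico y₁ w := by
    ext k
    rw [Finset.mem_filter, hT, Finset.mem_filter, Finset.mem_Icc, Finset.mem_Ico]
    rw [not_le]
    constructor
    · rintro ⟨⟨⟨h1, h2⟩, h3⟩, h4⟩
      exact ⟨h1, h4⟩
    · rintro ⟨h1, h2⟩
      have hkn : k ≤ n := by omega
      have := hF2 k h1 hkn
      exact ⟨⟨⟨h1, hkn⟩, by omega⟩, by omega⟩
  have hIco : (Finset.Ico y₁ w).card = w - y₁ := Nat.card_Ico y₁ w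
  have hsum : ∑ i ∈ Finset.Icc 2 w, (lmco n S Q i : ℤ) = (T.card : ℤ) := by
    rw [hfib]
    push_cast
    exact Finset.sum_congr rfl (fun i hi => by rw [hlmco i hi])
  rw [hsum]
  have key : coN n S Q w + (w - y₁) = T.card := by
    rw [hcoN]
    rw [hlow, hIco] at hsplit
    omega
  rcases le_total (y₁ : ℤ) (w : ℤ) with h | h
  · rw [max_eq_left (by omega)]
    omega
  · rw [max_eq_right (by omega)]
    omega
end
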